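/- For any period n and cycle length a ≥ 1 with n + a ≤ T, and any reals y₁ ≤ y₂ ≤ y_{n,a}, the increments of the multi-period cost functions satisfy L_{n,a}(y₂) − L_{n,a}(y₁) ≥ L_{n,a+1}(y₂) − L_{n,a+1}(y₁); that is, L_{n,a} decreases at least as fast as L_{n,a+1} to the left of y_{n,a}. -/

import Mathlib

open MeasureTheory ProbabilityTheory

/-- Accumulated demand `ξ_{n,k} = ξ_n + ⋯ + ξ_{n+k-1}`. -/
noncomputable def acc {Ω : Type*} (ξ : ℕ → Ω → ℝ) (n k : ℕ) (ω : Ω) : ℝ :=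
  ∑ i ∈ Finset.range k, ξ (n + i) ω

/-- Cumulative distribution function `φ_{n,k}(y) = P(ξ_{n,k} ≤ y)` of accumulated demand. -/
noncomputable def cdf {Ω : Type*} [MeasurableSpace Ω] (μ : Measure Ω) (ξ : ℕ → Ω → ℝ)
    (n k : ℕ) (y : ℝ) : ℝ :=
  (μ {ω | acc ξ n k ω ≤ y}).toReal

/-- Multi-period cost function
`L_{n,a}(y) = Σ_{k=1}^{a} (h·E[(y − ξ_{n,k})⁺] + p·E[(ξ_{n,k} − y)⁺])`. -/
noncomputable def Lmp {Ω : Type*} [MeasurableSpace Ω] (μ : Measure Ω) (h p : ℝ)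
    (ξ : ℕ → Ω → ℝ) (n a : ℕ) (y : ℝ) : ℝ :=
  ∑ k ∈ Finset.Icc 1 a,
    (h * ∫ ω, max (y - acc ξ n k ω) 0 ∂μ + p * ∫ ω, max (acc ξ n k ω - y) 0 ∂μ)
/-- Proposition 1(d) in increment form: for `y₁ ≤ y₂ ≤ y_{n,a}`,
`L_{n,a}(y₂) − L_{n,a}(y₁) ≥ L_{n,a+1}(y₂) − L_{n,a+1}(y₁)`. -/
theorem stmt3 {Ω : Type*} [MeasurableSpace Ω] (μ : Measure Ω) [IsProbabilityMeasure μ]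
    (T : ℕ) (ξ : ℕ → Ω → ℝ)
    (hmeas : ∀ i, Measurable (ξ i)) (hint : ∀ i, Integrable (ξ i) μ)
    (hpos : ∀ i, ∀ᵐ ω ∂μ, 0 ≤ ξ i ω)
    (hind : iIndepFun ξ μ)
    (h p : ℝ) (hh : 0 < h) (hp : 0 < p)
    (n a : ℕ) (hn : 1 ≤ n) (ha : 1 ≤ a) (hna : n + a ≤ T)
    (yna : ℝ)
    (hyna : IsLeast
      {y : ℝ | (a : ℝ) * p / (h + p) ≤ ∑ k ∈ Finset.Icc 1 a, cdf μ ξ n k y} yna)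
    (y₁ y₂ : ℝ) (h12 : y₁ ≤ y₂) (h2 : y₂ ≤ yna) :
    Lmp μ h p ξ n (a + 1) y₂ - Lmp μ h p ξ n (a + 1) y₁ ≤
      Lmp μ h p ξ n a y₂ - Lmp μ h p ξ n a y₁ := by
  classical
  have hhp : (0:ℝ) < h + p := by linarith
  set X : Ω → ℝ := acc ξ n (a + 1) with hXdef
  have hXmeas : Measurable X := Finset.measurable_sum _ (fun i _ => hmeas _)
  have hXint : Integrable X μ := integrable_finset_sum _ (fun i _ => hint _)
  -- integrability of the positive parts
  have hA : ∀ y : ℝ, Integrable (fun ω => max (y - X ω) 0) μ :=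
    fun y => ((integrable_const y).sub hXint).pos_part
  have hC : ∀ y : ℝ, Integrable (fun ω => max (X ω - y) 0) μ :=
    fun y => (hXint.sub (integrable_const y)).pos_part
  -- split off the top term
  have hsplit : ∀ y : ℝ, Lmp μ h p ξ n (a + 1) y =
      Lmp μ h p ξ n a y + (h * ∫ ω, max (y - X ω) 0 ∂μ + p * ∫ ω, max (X ω - y) 0 ∂μ) := by
    intro y
    simp only [Lmp]
    exact Finset.sum_Icc_succ_top (by omega) _
  -- key probability bound : μ {X < y₂} ≤ p/(h+p)
  set q : ℝ := p / (h + p) with hqdef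
  have hq0 : 0 ≤ q := by positivity
  -- a.e. nonnegativity of all demands
  have hposall : ∀ᵐ ω ∂μ, ∀ i, 0 ≤ ξ i ω := ae_all_iff.2 hpos
  have hcdf_lt : ∀ t : ℝ, t < yna → (μ {ω | X ω ≤ t}).toReal < q := by
    intro t ht
    have htS : ¬ ((a : ℝ) * p / (h + p) ≤ ∑ k ∈ Finset.Icc 1 a, cdf μ ξ n k t) := by
      intro hmem
      exact absurd (hyna.2 hmem) (not_le.2 ht)
    have hsum : ∑ k ∈ Finset.Icc 1 a, cdf μ ξ n k t < ∑ k ∈ Finset.Icc 1 a, q := by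
      have hcard : ((Finset.Icc 1 a).card : ℝ) = a := by simp
      rw [Finset.sum_const, Nat.card_Icc]
      push_neg at htS
      calc ∑ k ∈ Finset.Icc 1 a, cdf μ ξ n k t < (a : ℝ) * p / (h + p) := htS
        _ = (a + 1 - 1) • q := by
            simp only [hqdef, nsmul_eq_mul]
            push_cast [Nat.add_sub_cancel]
            ring
    obtain ⟨k, hk, hklt⟩ := Finset.exists_lt_of_sum_lt hsum
    have hk1 : 1 ≤ k := (Finset.mem_Icc.1 hk).1
    have hka : k ≤ a := (Finset.mem_Icc.1 hk).2
    -- μ {X ≤ t} ≤ μ {acc k ≤ t}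
    have hle : μ {ω | X ω ≤ t} ≤ μ {ω | acc ξ n k ω ≤ t} := by
      apply measure_mono_ae
      filter_upwards [hposall] with ω hω hXt
      have : acc ξ n k ω ≤ X ω := by
        apply Finset.sum_le_sum_of_subset_of_nonneg
        · exact Finset.range_subset_range.2 (by omega)
        · exact fun i _ _ => hω _
      exact le_trans this hXt
    calc (μ {ω | X ω ≤ t}).toReal ≤ (μ {ω | acc ξ n k ω ≤ t}).toReal := by
          exact ENNReal.toReal_mono (measure_ne_top _ _) hle
      _ < q := hklt
  have hP : (μ {ω | X ω < y₂}).toReal ≤ q := by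
    apply ENNReal.toReal_le_of_le_ofReal hq0
    have hU : {ω | X ω < y₂} = ⋃ m : ℕ, {ω | X ω ≤ y₂ - 1 / (m + 1)} := by
      ext ω
      simp only [Set.mem_setOf_eq, Set.mem_iUnion]
      constructor
      · intro hlt
        obtain ⟨m, hm⟩ := exists_nat_one_div_lt (show (0:ℝ) < y₂ - X ω by linarith)
        exact ⟨m, by linarith⟩
      · rintro ⟨m, hm⟩
        have : (0:ℝ) < 1 / (m + 1) := by positivity
        linarith
    rw [hU, Directed.measure_iUnion]
    · apply iSup_le
      intro m
      have htm : y₂ - 1 / (m + 1) < yna := by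
        have : (0:ℝ) < 1 / (m + 1) := by positivity
        linarith
      have := hcdf_lt _ htm
      rw [ENNReal.le_ofReal_iff_toReal_le (measure_ne_top _ _) hq0]
      exact this.le
    · apply Monotone.directed_le
      intro m m' hmm ω hω
      simp only [Set.mem_setOf_eq] at *
      have h1 : 1 / ((m':ℝ) + 1) ≤ 1 / ((m:ℝ) + 1) := by
        apply one_div_le_one_div_of_le (by positivity)
        exact_mod_cast by omega
      linarith
  -- pointwise bound
  set S : Set Ω := {ω | X ω < y₂} with hSdef
  have hSmeas : MeasurableSet S := measurableSet_lt hXmeas measurable_const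
  set Δ : ℝ := y₂ - y₁ with hΔ
  have hΔ0 : 0 ≤ Δ := by simp [hΔ]; linarith
  set B : Ω → ℝ := fun ω => Δ * (h + p) * S.indicator (fun _ => (1:ℝ)) ω - p * Δ with hBdef
  have hBint : Integrable B μ :=
    (((integrable_const (1:ℝ)).indicator hSmeas).const_mul _).sub (integrable_const _)
  set F : Ω → ℝ := fun ω =>
    h * (max (y₂ - X ω) 0 - max (y₁ - X ω) 0) + p * (max (X ω - y₂) 0 - max (X ω - y₁) 0)
    with hFdef
  have hFint : Integrable F μ :=
    ((((hA y₂).sub (hA y₁)).const_mul h).add (((hC y₂).sub (hC y₁)).const_mul p))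
  have hFB : ∀ ω, F ω ≤ B ω := by
    intro ω
    simp only [hFdef, hBdef]
    by_cases hx : X ω < y₂
    · have hind1 : S.indicator (fun _ => (1:ℝ)) ω = 1 := by
        simp only [hSdef, Set.indicator_apply, Set.mem_setOf_eq, if_pos hx]
      rw [hind1]
      have h1 : max (y₂ - X ω) 0 - max (y₁ - X ω) 0 ≤ Δ := by
        rcases le_or_gt (y₁ - X ω) 0 with hc | hc
        · rw [max_eq_right hc]
          simp only [sub_zero]
          apply max_le <;> simp [hΔ] <;> linarith
        · rw [max_eq_left hc.le, max_eq_left (by linarith)]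
          simp [hΔ]
      have h2 : max (X ω - y₂) 0 - max (X ω - y₁) 0 ≤ 0 := by
        have := max_le_max (show X ω - y₂ ≤ X ω - y₁ by linarith) (le_refl (0:ℝ))
        linarith
      nlinarith
    · push_neg at hx
      have hind0 : S.indicator (fun _ => (1:ℝ)) ω = 0 :=
        Set.indicator_of_notMem (by simpa [hSdef] using not_lt.2 hx) _
      rw [hind0]
      rw [max_eq_right (by linarith), max_eq_right (by linarith),
        max_eq_left (by linarith), max_eq_left (by linarith)]
      ring_nf
      nlinarith
  have hIFB : ∫ ω, F ω ∂μ ≤ ∫ ω, B ω ∂μ := integral_mono hFint hBint hFB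
  have hIB : ∫ ω, B ω ∂μ = Δ * (h + p) * (μ S).toReal - p * Δ := by
    simp only [hBdef]
    have hi1 : Integrable (fun ω => Δ * (h + p) * S.indicator (fun _ => (1:ℝ)) ω) μ :=
      ((integrable_const (1:ℝ)).indicator hSmeas).const_mul _
    rw [integral_sub hi1 (integrable_const _), integral_const_mul,
      integral_indicator_const (1:ℝ) hSmeas, integral_const]
    simp [measure_univ, Measure.real]
  have hIB0 : ∫ ω, B ω ∂μ ≤ 0 := by
    rw [hIB]
    have h1 : Δ * (h + p) * (μ S).toReal ≤ Δ * (h + p) * q :=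
      mul_le_mul_of_nonneg_left hP (by positivity)
    have h2 : Δ * (h + p) * q = p * Δ := by
      rw [hqdef]
      field_simp
    linarith
  have hIF : ∫ ω, F ω ∂μ =
      (h * ∫ ω, max (y₂ - X ω) 0 ∂μ + p * ∫ ω, max (X ω - y₂) 0 ∂μ) -
      (h * ∫ ω, max (y₁ - X ω) 0 ∂μ + p * ∫ ω, max (X ω - y₁) 0 ∂μ) := by
    have hi1 : Integrable (fun ω => h * (max (y₂ - X ω) 0 - max (y₁ - X ω) 0)) μ :=
      ((hA y₂).sub (hA y₁)).const_mul h
    have hi2 : Integrable (fun ω => p * (max (X ω - y₂) 0 - max (X ω - y₁) 0)) μ :=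
      ((hC y₂).sub (hC y₁)).const_mul p
    have hs1 : Integrable (fun ω => max (y₂ - X ω) 0 - max (y₁ - X ω) 0) μ :=
      (hA y₂).sub (hA y₁)
    have hs2 : Integrable (fun ω => max (X ω - y₂) 0 - max (X ω - y₁) 0) μ :=
      (hC y₂).sub (hC y₁)
    simp only [hFdef]
    rw [integral_add hi1 hi2, integral_const_mul, integral_const_mul,
      integral_sub (hA y₂) (hA y₁), integral_sub (hC y₂) (hC y₁)]
    ring
  rw [hsplit y₁, hsplit y₂]
  have := hIFB.trans hIB0
  rw [hIF] at this
  linarith
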